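/- Almost-sure full rank of the feature matrix at initialization: assume each φ_k ∈ C¹(ℝ), m ≤ K, and for any m distinct reals z_1, …, z_m the K×m matrix [φ_k(z_j)] has full rank m. Let x̃_1, …, x̃_m ∈ ℝ^{d+1} be pairwise distinct. Let c_1, …, c_N be i.i.d. samples from a probability distribution on ℝ absolutely continuous with respect to Lebesgue measure, and let v_1, …, v_N be i.i.d. samples from the standard Gaussian N(0, I_{d+1}), with c and V independent. Then with probability 1, the K×m matrix Ψ with entries Ψ_{kj} = Σ_{i=1}^N c_i φ_k(v_iᵀ x̃_j) has full rank m. -/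

import Mathlib

open MeasureTheory ProbabilityTheory
open scoped BigOperators

noncomputable section

open Polynomial in
lemma aux_rank_eq_iff_det_gram {K m : ℕ} (M : Matrix (Fin K) (Fin m) ℝ) :
    M.rank = m ↔ (Matrix.transpose M * M).det ≠ 0 := by
  rw [← Matrix.rank_transpose_mul_self]
  constructor
  · intro h
    have hr : LinearMap.range (Matrix.transpose M * M).mulVecLin = ⊤ := by
      apply Submodule.eq_top_of_finrank_eq
      rw [show Module.finrank ℝ (Fin m → ℝ) = m by simp]
      exact h
    have hsurj0 : Function.Surjective ((Matrix.transpose M * M).mulVecLin) :=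
      LinearMap.range_eq_top.mp hr
    have hsurj : Function.Surjective ((Matrix.transpose M * M).mulVec) := fun y =>
      (hsurj0 y).imp fun x hx => by rw [Matrix.mulVecLin_apply] at hx; exact hx
    have := (Matrix.isUnit_iff_isUnit_det _).mp (Matrix.mulVec_surjective_iff_isUnit.mp hsurj)
    exact this.ne_zero
  · intro h
    have := Matrix.rank_of_isUnit (Matrix.transpose M * M)
      ((Matrix.isUnit_iff_isUnit_det _).mpr (isUnit_iff_ne_zero.mpr h))
    simpa using this

open Polynomial in
lemma aux_gram_det_poly {K m : ℕ} (A B : Matrix (Fin K) (Fin m) ℝ) :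
    ∃ p : Polynomial ℝ, ∀ a : ℝ,
      p.eval a = (Matrix.transpose (a • A + B) * (a • A + B)).det := by
  classical
  refine ⟨(Matrix.of fun j j' : Fin m => ∑ k : Fin K,
      (C (A k j) * X + C (B k j)) * (C (A k j') * X + C (B k j'))).det, fun a => ?_⟩
  rw [← Polynomial.coe_evalRingHom, RingHom.map_det]
  congr 1
  ext j j'
  simp only [RingHom.mapMatrix_apply, Matrix.map_apply, Matrix.of_apply]
  rw [map_sum]
  simp only [Matrix.mul_apply, Matrix.transpose_apply,
    Matrix.add_apply, Matrix.smul_apply, smul_eq_mul]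
  refine Finset.sum_congr rfl fun k _ => ?_
  simp only [coe_evalRingHom, eval_add, eval_mul, eval_C, eval_X]
  ring

open Polynomial in
lemma aux_finite_bad_param {K m : ℕ} {A : Matrix (Fin K) (Fin m) ℝ}
    (B : Matrix (Fin K) (Fin m) ℝ) (hA : (Matrix.transpose A * A).det ≠ 0) :
    {a : ℝ | (Matrix.transpose (a • A + B) * (a • A + B)).det = 0}.Finite := by
  obtain ⟨p, hp⟩ := aux_gram_det_poly A B
  obtain ⟨q, hq⟩ := aux_gram_det_poly B A
  have hq0 : q.eval 0 ≠ 0 := by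
    rw [hq 0]
    simpa using hA
  have hqne : q ≠ 0 := fun h => hq0 (by simp [h])
  obtain ⟨s, hs⟩ :=
    (((q.finite_setOf_isRoot hqne).union (Set.finite_singleton 0)).infinite_compl).nonempty
  have hs0 : s ≠ 0 := fun h => hs (Or.inr h)
  have hsroot : q.eval s ≠ 0 := fun h => hs (Or.inl h)
  have hpne : p ≠ 0 := by
    intro h0
    apply hsroot
    have h1 := hp s⁻¹
    rw [h0, eval_zero] at h1
    have h2 : s⁻¹ • A + B = s⁻¹ • (s • B + A) := by
      rw [smul_add, smul_smul, inv_mul_cancel₀ hs0, one_smul, add_comm]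
    rw [h2] at h1
    have h3 : (Matrix.transpose (s⁻¹ • (s • B + A)) * (s⁻¹ • (s • B + A))) =
        (s⁻¹ * s⁻¹) • (Matrix.transpose (s • B + A) * (s • B + A)) := by
      rw [Matrix.transpose_smul, Matrix.smul_mul, Matrix.mul_smul, smul_smul]
    rw [h3, Matrix.det_smul, ← hq s] at h1
    have hne : (s⁻¹ * s⁻¹) ^ Fintype.card (Fin m) ≠ 0 := by positivity
    rcases mul_eq_zero.mp h1.symm with h | h
    · exact absurd h hne
    · exact h
  refine (p.finite_setOf_isRoot hpne).subset fun a ha => ?_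
  simp only [Set.mem_setOf_eq, IsRoot.def] at *
  rw [hp a]
  exact ha

lemma aux_pi_ac {n : ℕ} (μ ν : Fin n → Measure ℝ) [∀ i, IsProbabilityMeasure (μ i)]
    [∀ i, SigmaFinite (ν i)] (h : ∀ i, μ i ≪ ν i) :
    Measure.pi μ ≪ Measure.pi ν := by
  induction n with
  | zero =>
    intro s hs
    rcases Set.eq_empty_or_nonempty s with rfl | ⟨x, hx⟩
    · simp
    · exfalso
      have hsu : s = Set.univ := by
        ext y
        simp only [Set.mem_univ, iff_true]
        rwa [Subsingleton.elim y x]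
      rw [hsu, Measure.pi_empty_univ] at hs
      exact one_ne_zero hs
  | succ n ih =>
    have e := MeasureTheory.measurePreserving_piFinSuccAbove μ 0
    have e' := MeasureTheory.measurePreserving_piFinSuccAbove ν 0
    have h1 : Measure.pi μ =
        ((μ 0).prod (Measure.pi fun j => μ ((0 : Fin (n+1)).succAbove j))).map
        (MeasurableEquiv.piFinSuccAbove (fun _ => ℝ) 0).symm := by
      rw [← e.map_eq,
        Measure.map_map (MeasurableEquiv.measurable _) (MeasurableEquiv.measurable _)]
      simp
    have h2 : Measure.pi ν =
        ((ν 0).prod (Measure.pi fun j => ν ((0 : Fin (n+1)).succAbove j))).map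
        (MeasurableEquiv.piFinSuccAbove (fun _ => ℝ) 0).symm := by
      rw [← e'.map_eq,
        Measure.map_map (MeasurableEquiv.measurable _) (MeasurableEquiv.measurable _)]
      simp
    rw [h1, h2]
    exact (Measure.AbsolutelyContinuous.prod (h 0) (ih _ _ fun j => h _)).map
      (MeasurableEquiv.measurable _)

lemma aux_hyperplane_null {d : ℕ} (a : Fin (d + 1) → ℝ) (ha : a ≠ 0) :
    (volume : Measure (Fin (d + 1) → ℝ)) {w | ∑ l, w l * a l = 0} = 0 := by
  obtain ⟨l₀, hl₀⟩ : ∃ l, a l ≠ 0 := by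
    by_contra hc
    push_neg at hc
    exact ha (funext fun l => hc l)
  set ℓ : (Fin (d + 1) → ℝ) →ₗ[ℝ] ℝ := ∑ l, a l • LinearMap.proj l with hℓ
  have hℓapp : ∀ w, ℓ w = ∑ l, w l * a l := by
    intro w
    simp [hℓ, LinearMap.sum_apply, mul_comm]
  have hker : LinearMap.ker ℓ ≠ ⊤ := by
    intro htop
    have h1 : ℓ (Pi.single l₀ 1) = 0 := by
      rw [← LinearMap.mem_ker, htop]
      trivial
    rw [hℓapp] at h1
    simp only [Pi.single_apply] at h1
    rw [Finset.sum_eq_single l₀ (fun b _ hb => by simp [hb]) (by simp)] at h1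
    simp at h1
    exact hl₀ h1
  have h0 := Measure.addHaar_submodule (volume : Measure (Fin (d + 1) → ℝ))
    (LinearMap.ker ℓ) hker
  have hset : {w : Fin (d + 1) → ℝ | ∑ l, w l * a l = 0} = ↑(LinearMap.ker ℓ) := by
    ext w
    simp [LinearMap.mem_ker, hℓapp]
  rw [hset]
  exact h0

/-- almost-sure full rank of the feature matrix at initialization.
Assume each `φ_k ∈ C¹(ℝ)`, `m ≤ K`, and for any `m` distinct reals `z_1, …, z_m` the `K × m`
matrix `[φ_k(z_j)]` has full rank `m`.  Let the data points `x̃_j ∈ ℝ^{d+1}` be pairwise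
distinct, let `c_1, …, c_N` be i.i.d. from a probability measure `μc ≪ Lebesgue`, and let
`v_1, …, v_N` be i.i.d. standard Gaussians `N(0, I_{d+1})`, independent of `c`.  Then with
probability 1 the `K × m` matrix `Ψ_{kj} = Σ_i c_i φ_k(v_iᵀ x̃_j)` has full rank `m`. -/
theorem feature_matrix_ae_full_rank {N d K m : ℕ} (hN : 0 < N) (hmK : m ≤ K)
    (φ : Fin K → ℝ → ℝ) (hφ : ∀ k, ContDiff ℝ 1 (φ k))
    (hrank : ∀ z : Fin m → ℝ, Function.Injective z →
      Matrix.rank (Matrix.of fun (k : Fin K) (j : Fin m) => φ k (z j)) = m)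
    (xt : Fin m → Fin (d + 1) → ℝ) (hxt : Function.Injective xt)
    (μc : Measure ℝ) [IsProbabilityMeasure μc] (hac : μc ≪ volume) :
    ∀ᵐ p ∂((Measure.pi fun _ : Fin N => μc).prod
        (Measure.pi fun _ : Fin N => Measure.pi fun _ : Fin (d + 1) => gaussianReal 0 1)),
      Matrix.rank (Matrix.of fun (k : Fin K) (j : Fin m) =>
        ∑ i, p.1 i * φ k (∑ l, p.2 i l * xt j l)) = m := by
  classical
  obtain ⟨N', rfl⟩ : ∃ n, N = n + 1 := ⟨N - 1, by omega⟩
  set μC : Measure (Fin (N' + 1) → ℝ) := Measure.pi fun _ => μc with hμC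
  set μG : Measure (Fin (d + 1) → ℝ) := Measure.pi fun _ => gaussianReal 0 1 with hμG
  set μV : Measure (Fin (N' + 1) → Fin (d + 1) → ℝ) := Measure.pi fun _ => μG with hμV
  set Ψ : (Fin (N' + 1) → ℝ) × (Fin (N' + 1) → Fin (d + 1) → ℝ) →
      Matrix (Fin K) (Fin m) ℝ := fun p =>
    Matrix.of fun (k : Fin K) (j : Fin m) => ∑ i, p.1 i * φ k (∑ l, p.2 i l * xt j l) with hΨdef
  set g : (Fin (N' + 1) → ℝ) × (Fin (N' + 1) → Fin (d + 1) → ℝ) → ℝ := fun p =>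
    (Matrix.transpose (Ψ p) * Ψ p).det with hgdef
  have hΨc : Continuous Ψ := by
    rw [hΨdef]
    apply continuous_matrix
    intro k j
    simp only [Matrix.of_apply]
    apply continuous_finset_sum
    intro i _
    exact ((continuous_apply i).comp continuous_fst).mul
      ((hφ k).continuous.comp (continuous_finset_sum _ fun l _ =>
        by fun_prop))
  have hgc : Continuous g := (hΨc.matrix_transpose.matrix_mul hΨc).matrix_det
  have hSm : MeasurableSet {p : (Fin (N' + 1) → ℝ) × (Fin (N' + 1) → Fin (d + 1) → ℝ) |
      g p ≠ 0} := (hgc.measurable (measurableSet_singleton 0)).compl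
  have main : ∀ᵐ p ∂(μC.prod μV), g p ≠ 0 := by
    rw [Measure.ae_prod_iff_ae_ae hSm, Measure.ae_ae_comm hSm]
    -- good V event
    have hgood : ∀ᵐ V ∂μV, Function.Injective fun j : Fin m => ∑ l, V 0 l * xt j l := by
      have hpair : ∀ j j' : Fin m, j ≠ j' →
          ∀ᵐ V ∂μV, (∑ l, V 0 l * xt j l) ≠ (∑ l, V 0 l * xt j' l) := by
        intro j j' hjj
        set a : Fin (d + 1) → ℝ := fun l => xt j l - xt j' l with hadef
        have ha : a ≠ 0 := by
          intro h
          apply hjj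
          apply hxt
          funext l
          have := congrFun h l
          simpa [hadef, sub_eq_zero] using this
        have hGac : μG ≪ (volume : Measure (Fin (d + 1) → ℝ)) := by
          rw [hμG, volume_pi]
          exact aux_pi_ac (n := d + 1) (fun _ => gaussianReal 0 1) (fun _ => volume)
            (fun _ => gaussianReal_absolutelyContinuous 0 one_ne_zero)
        have hG : μG {w | ∑ l, w l * a l = 0} = 0 := hGac (aux_hyperplane_null a ha)
        have hVnull : μV (Function.eval (0 : Fin (N' + 1)) ⁻¹'
            {w | ∑ l, w l * a l = 0}) = 0 :=
          Measure.pi_eval_preimage_null _ hG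
        rw [ae_iff]
        convert hVnull using 2
        ext V
        simp only [Set.mem_setOf_eq, Set.mem_preimage, Function.eval, not_not, hadef,
          mul_sub, Finset.sum_sub_distrib, sub_eq_zero]
      have hall : ∀ᵐ V ∂μV, ∀ j j' : Fin m,
          (∑ l, V 0 l * xt j l) = (∑ l, V 0 l * xt j' l) → j = j' := by
        rw [ae_all_iff]
        intro j
        rw [ae_all_iff]
        intro j'
        by_cases hjj : j = j'
        · subst hjj
          exact Filter.Eventually.of_forall fun _ _ => rfl
        · exact (hpair j j' hjj).mono fun V hV heq => absurd heq hV
      exact hall.mono fun V h j j' hjj => h j j' hjj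
    filter_upwards [hgood] with V hVinj
    set A₀ : Matrix (Fin K) (Fin m) ℝ :=
      Matrix.of fun (k : Fin K) (j : Fin m) => φ k (∑ l, V 0 l * xt j l) with hA₀def
    have hA₀ : (Matrix.transpose A₀ * A₀).det ≠ 0 :=
      (aux_rank_eq_iff_det_gram A₀).mp (hrank _ hVinj)
    -- decompose μC
    have e := MeasureTheory.measurePreserving_piFinSuccAbove (fun _ : Fin (N' + 1) => μc) 0
    have hmap : μC = ((μc).prod (Measure.pi fun _ : Fin N' => μc)).map
        (MeasurableEquiv.piFinSuccAbove (fun _ : Fin (N' + 1) => ℝ) 0).symm := by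
      rw [← e.map_eq,
        Measure.map_map (MeasurableEquiv.measurable _) (MeasurableEquiv.measurable _)]
      simp
      exact hμC
    have hQc : Continuous fun y : ℝ × (Fin N' → ℝ) =>
        g ((MeasurableEquiv.piFinSuccAbove (fun _ : Fin (N' + 1) => ℝ) 0).symm y, V) := by
      apply hgc.comp
      apply Continuous.prodMk _ continuous_const
      exact Continuous.finInsertNth (A := fun _ : Fin (N' + 1) => ℝ) 0
        continuous_fst continuous_snd
    have hQm : MeasurableSet {y : ℝ × (Fin N' → ℝ) |
        g ((MeasurableEquiv.piFinSuccAbove (fun _ : Fin (N' + 1) => ℝ) 0).symm y, V) ≠ 0} :=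
      (hQc.measurable (measurableSet_singleton 0)).compl
    have hgV : Continuous fun c : Fin (N' + 1) → ℝ => g (c, V) :=
      hgc.comp (continuous_id.prodMk continuous_const)
    have hQm0 : MeasurableSet {c : Fin (N' + 1) → ℝ | g (c, V) ≠ 0} :=
      (hgV.measurable (measurableSet_singleton 0)).compl
    rw [hmap, ae_map_iff (MeasurableEquiv.measurable _).aemeasurable hQm0,
      Measure.ae_prod_iff_ae_ae hQm, Measure.ae_ae_comm hQm]
    refine ae_of_all _ fun c' => ?_
    set B : Matrix (Fin K) (Fin m) ℝ := Matrix.of fun (k : Fin K) (j : Fin m) =>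
      ∑ i : Fin N', c' i * φ k (∑ l, V ((0 : Fin (N' + 1)).succAbove i) l * xt j l) with hBdef
    have hform : ∀ a : ℝ,
        Ψ ((MeasurableEquiv.piFinSuccAbove (fun _ : Fin (N' + 1) => ℝ) 0).symm (a, c'), V) =
          a • A₀ + B := by
      intro a
      rw [hΨdef]
      ext k j
      simp only [Matrix.of_apply, Matrix.add_apply, Matrix.smul_apply, smul_eq_mul,
        hA₀def, hBdef]
      rw [Fin.sum_univ_succAbove _ 0]
      simp [MeasurableEquiv.piFinSuccAbove_symm_apply, Fin.insertNth_apply_same,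
        Fin.insertNth_apply_succAbove]
    have hbad := aux_finite_bad_param (A := A₀) B hA₀
    rw [ae_iff]
    have hseteq : {a : ℝ |
        ¬ g ((MeasurableEquiv.piFinSuccAbove (fun _ : Fin (N' + 1) => ℝ) 0).symm (a, c'), V)
          ≠ 0} =
        {a : ℝ | (Matrix.transpose (a • A₀ + B) * (a • A₀ + B)).det = 0} := by
      ext a
      simp only [Set.mem_setOf_eq, not_not, hgdef]
      rw [hform a]
    rw [hseteq]
    exact hac (hbad.measure_zero _)
  filter_upwards [main] with p hp
  exact (aux_rank_eq_iff_det_gram (Ψ p)).mpr hp
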